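/- Let (B, d_B) → (B ⊗ ΛW, D) be a relative Sullivan model with projection a DG algebra map (so the ideal generated by W is D-stable), with K-S basis {w_i} and H^{odd}(B) = 0, and all w_i of odd degree. Then by a change of generators one can arrange the linear part of D to vanish: explicitly, if D(w_k) = Σ_{i<k} b_{i,k} w_i + χ with χ ∈ B ⊗ Λ^{≥2}W and D(w_i) ∈ B ⊗ Λ^{≥2}W for all i < k, then each b_{i,k} is a d_B-exact cycle: d_B(b_{i,k}) = 0 and b_{i,k} = d_B(η_{i,k}) for some η_{i,k} ∈ B. -/

import Mathlib

/-!
Common setup for the fibrewise Hopf / Leray–Samelson statements.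

`B` is a commutative DG algebra over `ℚ`, with (cohomological) grading
`𝒜 : ℤ → Submodule ℚ B` and differential `dB`.  `W` is a graded vector space with
ordered basis indexed by `ι`, with degrees `deg : ι → ℤ`; when `W` is concentrated in
odd degrees the free graded-commutative algebra `ΛW` is the exterior algebra, so the
relative Sullivan model `B ⊗ ΛW` is the exterior algebra over `B` on `ι →₀ B`, and
likewise `B ⊗ ΛW ⊗ ΛW` and `B ⊗ ΛW ⊗ ΛW ⊗ ΛW` are exterior algebras on the doubled
and tripled index sets.
-/

noncomputable section

variable (B : Type) [CommRing B] [Algebra ℚ B] 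

/-- The "model" algebra `B ⊗ ΛW` for `W` oddly graded with basis indexed by `κ`. -/
abbrev MExt (κ : Type) := ExteriorAlgebra B (κ →₀ B)

variable {B} {κ κ' ι : Type} [LinearOrder ι]

/-- The generator `w_k` of `B ⊗ ΛW`. -/
def egen (k : κ) : MExt B κ := ExteriorAlgebra.ι B (Finsupp.single k 1)

/-- The `B`-algebra map induced by relabelling generators along `f`. -/
def emb (f : κ → κ') : MExt B κ →ₐ[B] MExt B κ' :=
  ExteriorAlgebra.lift B
    ⟨(ExteriorAlgebra.ι B).comp (Finsupp.lmapDomain B B f),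
     fun m => ExteriorAlgebra.ι_sq_zero _⟩

/-- The projection `B ⊗ ΛW → B` killing all generators (the model of the section). -/
def projExt : MExt B κ →ₐ[B] B :=
  ExteriorAlgebra.lift B ⟨0, fun m => zero_mul 0⟩

/-- `dB` is a differential on the graded algebra `(B, 𝒜)`: it squares to zero, raises
degree by one, and satisfies the (graded) Leibniz rule. -/
def IsBDifferential (𝒜 : ℤ → Submodule ℚ B) (dB : B →ₗ[ℚ] B) : Prop :=
  (∀ b, dB (dB b) = 0) ∧ (∀ (n : ℤ), ∀ b ∈ 𝒜 n, dB b ∈ 𝒜 (n + 1)) ∧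
    (∀ (n : ℤ), ∀ a ∈ 𝒜 n, ∀ b : B, dB (a * b) = dB a * b + (n.negOnePow : ℤ) • (a * dB b))

/-- `D` is a differential on the model `B ⊗ ΛW` (for `W` oddly graded) restricting to
`dB` on `B`: it squares to zero and is the unique such derivation determined by its
values on `B` and on the (odd) generators. -/
def IsModelDifferential (𝒜 : ℤ → Submodule ℚ B) (dB : B →ₗ[ℚ] B)
    (D : MExt B κ →ₗ[ℚ] MExt B κ) : Prop :=
  (∀ x, D (D x) = 0) ∧
  (∀ b : B, D (algebraMap B _ b) = algebraMap B _ (dB b)) ∧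
  (∀ (n : ℤ), ∀ a ∈ 𝒜 n, ∀ y : MExt B κ,
    D (algebraMap B _ a * y) =
      algebraMap B _ (dB a) * y + (n.negOnePow : ℤ) • (algebraMap B _ a * D y)) ∧
  (∀ (k : κ) (y : MExt B κ), D (egen k * y) = D (egen k) * y - egen k * D y)

/-- The (`B`-submodule corresponding to the) ideal generated by the `w_i`. -/
def genIdeal (B : Type) [CommRing B] [Algebra ℚ B] (κ : Type) : Submodule B (MExt B κ) :=
  Submodule.span B (Set.range (egen : κ → MExt B κ)) * ⊤

/-- `B ⊗ Λ^{≥2}W`, the span of words of length at least two in the generators. -/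
def lenGeTwo (B : Type) [CommRing B] [Algebra ℚ B] (κ : Type) : Submodule B (MExt B κ) :=
  Submodule.span B (Set.range (egen : κ → MExt B κ)) *
    Submodule.span B (Set.range (egen : κ → MExt B κ)) * ⊤

/-- `w_i` in the first factor of `B ⊗ ΛW ⊗ ΛW`. -/
def wL (i : ι) : MExt B (ι ⊕ ι) := egen (Sum.inl i)

/-- `w'_i` in the second factor of `B ⊗ ΛW ⊗ ΛW`. -/
def wR (i : ι) : MExt B (ι ⊕ ι) := egen (Sum.inr i)

/-- The inclusion `B ⊗ ΛW → B ⊗ ΛW ⊗ ΛW` as the first factor. -/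
def inlA : MExt B ι →ₐ[B] MExt B (ι ⊕ ι) := emb Sum.inl

/-- The inclusion `B ⊗ ΛW → B ⊗ ΛW ⊗ ΛW` as the second factor. -/
def inrA : MExt B ι →ₐ[B] MExt B (ι ⊕ ι) := emb Sum.inr

/-- A relative Sullivan model structure for `D` on `B ⊗ ΛW`: `W` has a K-S basis (each
`D(w_i)` involves only generators `w_j` with `j < i`) and the ideal generated by `W` is
`D`-stable (equivalently, the projection onto `B` is a DG map). -/
def IsRelSullivan (D : MExt B ι →ₗ[ℚ] MExt B ι) : Prop :=
  (∀ i : ι, D (egen i) ∈ Algebra.adjoin B {x : MExt B ι | ∃ j < i, x = egen j}) ∧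
  (∀ x ∈ genIdeal B ι, D x ∈ genIdeal B ι)

/-- `D2` is the differential on `B ⊗ ΛW ⊗ ΛW` induced by `D` (i.e. `D ⊗ 1 + 1 ⊗ D`). -/
def Extends2 (D : MExt B ι →ₗ[ℚ] MExt B ι)
    (D2 : MExt B (ι ⊕ ι) →ₗ[ℚ] MExt B (ι ⊕ ι)) : Prop :=
  (∀ x, D2 (inlA x) = inlA (D x)) ∧ (∀ x, D2 (inrA x) = inrA (D x))

/-- `C` is a fibrewise multiplication of models: a DG algebra map
`B ⊗ ΛW → B ⊗ ΛW ⊗ ΛW` which is the identity on `B`, commutes with the projections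
onto `B`, and satisfies `C(w) − w − w' ∈ B ⊗ Λ⁺W ⊗ Λ⁺W`. -/
def IsFibMult (D : MExt B ι →ₗ[ℚ] MExt B ι)
    (D2 : MExt B (ι ⊕ ι) →ₗ[ℚ] MExt B (ι ⊕ ι))
    (C : MExt B ι →ₐ[B] MExt B (ι ⊕ ι)) : Prop :=
  (∀ x, projExt (C x) = projExt x) ∧
  (∀ x, D2 (C x) = C (D x)) ∧
  (∀ i : ι, C (egen i) - wL i - wR i ∈
    Submodule.span B (Set.range (wL : ι → MExt B (ι ⊕ ι))) *
      Submodule.span B (Set.range (wR : ι → MExt B (ι ⊕ ι))) * ⊤)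

/-- The coefficientwise extension of a differential to `A[t]`. -/
def pmap (Dk : MExt B κ →ₗ[ℚ] MExt B κ) (p : Polynomial (MExt B κ)) : Polynomial (MExt B κ) :=
  p.sum fun n a => Polynomial.C (Dk a) * Polynomial.X ^ n

/-- The `t`-derivative of `p ∈ A[t]`. -/
def pder (p : Polynomial (MExt B κ)) : Polynomial (MExt B κ) :=
  p.sum fun n a => (n : ℤ) • (Polynomial.C a * Polynomial.X ^ (n - 1))

/-- The differential on `A ⊗ Λ(t, dt)`, modelled on `A[t] ⊕ A[t]·dt`:
`d(p + q·dt) = (Dp) + (Dq − ∂p/∂t)·dt` (the sign records the Koszul convention for the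
odd elements to which the homotopies below are applied). -/
def homDiff (Dk : MExt B κ →ₗ[ℚ] MExt B κ)
    (x : DualNumber (Polynomial (MExt B κ))) : DualNumber (Polynomial (MExt B κ)) :=
  TrivSqZeroExt.inl (pmap Dk x.fst) + TrivSqZeroExt.inr (pmap Dk x.snd - pder x.fst)

/-- `F₀` and `F₁` are DG homotopic under and over `B`, via a DG algebra homotopy
`K : B ⊗ ΛW → (B ⊗ ΛW ⊗ ⋯) ⊗ Λ(t, dt)` which is the identity on `B`, commutes with the
differentials and the projections onto `B`, and evaluates to `F₀`, `F₁` at `t = 0, 1`. -/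
def ModelHomotopic (Dsrc : MExt B ι →ₗ[ℚ] MExt B ι) (Dtgt : MExt B κ →ₗ[ℚ] MExt B κ)
    (F0 F1 : MExt B ι → MExt B κ) : Prop :=
  ∃ K : MExt B ι →+* DualNumber (Polynomial (MExt B κ)),
    (∀ b : B, K (algebraMap B _ b) = TrivSqZeroExt.inl (Polynomial.C (algebraMap B _ b))) ∧
    (∀ x, homDiff Dtgt (K x) = K (Dsrc x)) ∧
    (∀ x, (K x).fst.eval 0 = F0 x) ∧
    (∀ x, (K x).fst.eval 1 = F1 x) ∧
    (∀ x, Polynomial.map (projExt : MExt B κ →ₐ[B] B).toRingHom (K x).fst =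
      Polynomial.C (projExt x)) ∧
    (∀ x, Polynomial.map (projExt : MExt B κ →ₐ[B] B).toRingHom (K x).snd = 0)

/-- Equivalence of fibrewise multiplications of models `(D, C) ≡ (D', C')`: a DG
algebra isomorphism `φ : (B ⊗ ΛW, D') → (B ⊗ ΛW, D)` under and over `B`, such that
`C ∘ φ` and `(1 ⊗ φ ⊗ φ) ∘ C'` are DG homotopic under and over `B`.  (`φ2` is the map
`1 ⊗ φ ⊗ φ`, characterised by its compatibility with the two inclusions.) -/
def MultModelsEquiv (D : MExt B ι →ₗ[ℚ] MExt B ι)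
    (D2 : MExt B (ι ⊕ ι) →ₗ[ℚ] MExt B (ι ⊕ ι))
    (C : MExt B ι →ₐ[B] MExt B (ι ⊕ ι))
    (D' : MExt B ι →ₗ[ℚ] MExt B ι)
    (C' : MExt B ι →ₐ[B] MExt B (ι ⊕ ι)) : Prop :=
  ∃ (φ : MExt B ι ≃ₐ[B] MExt B ι) (φ2 : MExt B (ι ⊕ ι) →ₐ[B] MExt B (ι ⊕ ι)),
    (∀ x, projExt (φ x) = projExt x) ∧
    (∀ x, D (φ x) = φ (D' x)) ∧
    (∀ x, φ2 (inlA x) = inlA (φ x)) ∧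
    (∀ x, φ2 (inrA x) = inrA (φ x)) ∧
    ModelHomotopic D' D2 (fun x => C (φ x)) (fun x => φ2 (C' x))

/-- The standard comultiplication `C₀(w) = w + w'`. -/
def stdComult (B : Type) [CommRing B] [Algebra ℚ B] (ι : Type) : MExt B ι →ₐ[B] MExt B (ι ⊕ ι) :=
  ExteriorAlgebra.lift B
    ⟨(ExteriorAlgebra.ι B).comp
      ((Finsupp.lift ((ι ⊕ ι) →₀ B) B ι)
        (fun i => Finsupp.single (Sum.inl i) 1 + Finsupp.single (Sum.inr i) 1)),
     fun m => ExteriorAlgebra.ι_sq_zero _⟩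


namespace Stmt15Aux

/-- Extraction of the `w_i`-linear coefficient, as a `B`-algebra map to dual numbers. -/
def phi (i : ι) : MExt B ι →ₐ[B] DualNumber B :=
  ExteriorAlgebra.lift B
    ⟨(TrivSqZeroExt.inrHom B B).comp (Finsupp.lapply i),
     fun m => TrivSqZeroExt.inr_mul_inr B _ _⟩

lemma phi_egen (i j : ι) :
    phi i (egen (B := B) j) = TrivSqZeroExt.inr ((Finsupp.single j (1 : B)) i) := by
  rw [phi, egen]; erw [ExteriorAlgebra.lift_ι_apply]; simp

lemma projExt_egen (a : ι) : projExt (egen (B := B) a) = 0 := by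
  simp [projExt, egen, ExteriorAlgebra.lift_ι_apply]

lemma fst_phi (i : ι) (x : MExt B ι) : (phi i x).fst = projExt x := by
  induction x using ExteriorAlgebra.induction with
  | algebraMap r => simp [TrivSqZeroExt.algebraMap_eq_inl]
  | ι m => rw [phi, projExt]; erw [ExteriorAlgebra.lift_ι_apply, ExteriorAlgebra.lift_ι_apply]; simp
  | mul x y hx hy => rw [map_mul, map_mul, TrivSqZeroExt.fst_mul, hx, hy]
  | add x y hx hy => rw [map_add, map_add, TrivSqZeroExt.fst_add, hx, hy]

lemma phi_inr_of (i : ι) (x : MExt B ι) (hx : projExt x = 0) :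
    phi i x = TrivSqZeroExt.inr ((phi i x).snd) := by
  refine TrivSqZeroExt.ext ?_ ?_
  · rw [fst_phi, hx, TrivSqZeroExt.fst_inr]
  · rw [TrivSqZeroExt.snd_inr]

lemma phi_mul_zero (i : ι) (x y : MExt B ι) (hx : projExt x = 0) (hy : projExt y = 0) :
    phi i (x * y) = 0 := by
  rw [map_mul, phi_inr_of i x hx, phi_inr_of i y hy, TrivSqZeroExt.inr_mul_inr]

lemma mul_mem_genIdeal (a : ι) (z : MExt B ι) : egen (B := B) a * z ∈ genIdeal B ι :=
  Submodule.mul_mem_mul (Submodule.subset_span ⟨a, rfl⟩) Submodule.mem_top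

lemma egen_mem_genIdeal (a : ι) : egen (B := B) a ∈ genIdeal B ι := by
  simpa using mul_mem_genIdeal a (1 : MExt B ι)

lemma projExt_genIdeal {x : MExt B ι} (hx : x ∈ genIdeal B ι) : projExt x = 0 := by
  refine Submodule.mul_induction_on hx (fun m hm n _ => ?_)
    (fun a c ha hc => by rw [map_add, ha, hc, add_zero])
  have hm0 : projExt m = 0 := by
    induction hm using Submodule.span_induction with
    | mem y h => obtain ⟨a, rfl⟩ := h; exact projExt_egen a
    | zero => simp
    | add y w _ _ hy hw => rw [map_add, hy, hw, add_zero]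
    | smul c y _ hy => rw [map_smul, hy, smul_zero]
  rw [map_mul, hm0, zero_mul]

lemma lenGeTwo_le_spanT {x : MExt B ι} (hx : x ∈ lenGeTwo B ι) :
    x ∈ Submodule.span ℚ {x : MExt B ι | ∃ a c z, x = egen a * egen c * z} := by
  set T : Set (MExt B ι) := {x | ∃ a c z, x = egen a * egen c * z} with hT
  set Sp := Submodule.span B (Set.range (egen : ι → MExt B ι)) with hSp
  have key : ∀ u ∈ Sp, ∀ v ∈ Sp, ∀ z : MExt B ι, u * v * z ∈ Submodule.span ℚ T := by
    intro u hu
    induction hu using Submodule.span_induction with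
    | mem x h =>
      obtain ⟨a, rfl⟩ := h
      intro v hv
      induction hv using Submodule.span_induction with
      | mem y h => obtain ⟨c, rfl⟩ := h; intro z; exact Submodule.subset_span ⟨a, c, z, rfl⟩
      | zero => intro z; simpa using Submodule.zero_mem (Submodule.span ℚ T)
      | add y w _ _ hy hw =>
        intro z
        rw [mul_add, add_mul]
        exact Submodule.add_mem _ (hy z) (hw z)
      | smul c y _ hy =>
        intro z
        have h1 : egen a * (c • y) * z = egen a * y * (c • z) := by
          rw [mul_smul_comm, smul_mul_assoc, mul_smul_comm]
        rw [h1]; exact hy (c • z)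
    | zero => intro v _ z; simpa using Submodule.zero_mem (Submodule.span ℚ T)
    | add u w _ _ hu hw =>
      intro v hv z
      rw [add_mul, add_mul]
      exact Submodule.add_mem _ (hu v hv z) (hw v hv z)
    | smul c u _ hu =>
      intro v hv z
      have h1 : (c • u) * v * z = u * v * (c • z) := by
        rw [smul_mul_assoc, smul_mul_assoc, mul_smul_comm]
      rw [h1]; exact hu v hv (c • z)
  refine Submodule.mul_induction_on (C := fun m => m ∈ Submodule.span ℚ T) hx
    (fun m hm n _ => ?_) (fun a c ha hc => Submodule.add_mem _ ha hc)
  refine Submodule.mul_induction_on (C := fun m => m * n ∈ Submodule.span ℚ T) hm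
    (fun u hu v hv => key u hu v hv n)
    (fun a c ha hc => by rw [add_mul]; exact Submodule.add_mem _ ha hc)

lemma phi_lenGeTwo (i : ι) {x : MExt B ι} (hx : x ∈ lenGeTwo B ι) : phi i x = 0 := by
  have h : Submodule.span ℚ {x : MExt B ι | ∃ a c z, x = egen a * egen c * z} ≤
      LinearMap.ker ((phi (B := B) i).toLinearMap.restrictScalars ℚ) := by
    rw [Submodule.span_le]
    rintro y ⟨a, c, z, rfl⟩
    simp only [SetLike.mem_coe, LinearMap.mem_ker, LinearMap.coe_restrictScalars,
      AlgHom.toLinearMap_apply]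
    rw [mul_assoc]
    exact phi_mul_zero i _ _ (projExt_egen a) (projExt_genIdeal (mul_mem_genIdeal c z))
  simpa using h (lenGeTwo_le_spanT hx)

lemma snd_phi_D (i : ι) (D : MExt B ι →ₗ[ℚ] MExt B ι)
    (hL : ∀ (a : ι) (y : MExt B ι), D (egen a * y) = D (egen a) * y - egen a * D y)
    (hI : ∀ x ∈ genIdeal B ι, D x ∈ genIdeal B ι)
    {x : MExt B ι} (hx : x ∈ lenGeTwo B ι) : (phi i (D x)).snd = 0 := by
  have h : Submodule.span ℚ {x : MExt B ι | ∃ a c z, x = egen a * egen c * z} ≤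
      LinearMap.ker (((TrivSqZeroExt.sndHom B B).restrictScalars ℚ) ∘ₗ
        (((phi (B := B) i).toLinearMap.restrictScalars ℚ) ∘ₗ D)) := by
    rw [Submodule.span_le]
    rintro y ⟨a, c, z, rfl⟩
    simp only [SetLike.mem_coe, LinearMap.mem_ker, LinearMap.comp_apply,
      LinearMap.coe_restrictScalars, AlgHom.toLinearMap_apply, TrivSqZeroExt.sndHom_apply]
    rw [mul_assoc, hL a (egen c * z), map_sub,
      phi_mul_zero i _ _ (projExt_genIdeal (hI _ (egen_mem_genIdeal a)))
        (projExt_genIdeal (mul_mem_genIdeal c z)),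
      phi_mul_zero i _ _ (projExt_egen a) (projExt_genIdeal (hI _ (mul_mem_genIdeal c z)))]
    simp
  simpa using h (lenGeTwo_le_spanT hx)

lemma snd_phi_algebraMap_mul (i : ι) (c : B) (x : MExt B ι) :
    (phi i (algebraMap B (MExt B ι) c * x)).snd = c * (phi i x).snd := by
  rw [map_mul, AlgHom.commutes]
  simp [TrivSqZeroExt.snd_mul, TrivSqZeroExt.algebraMap_eq_inl, smul_eq_mul]

end Stmt15Aux

/-- induction step in the proof of the fibrewise Hopf theorem: let
`(B, d_B) → (B ⊗ ΛW, D)` be a relative Sullivan model with projection a DG algebra map,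
K-S basis `{w_i}` all of odd degree, and `H^{odd}(B) = 0`.  If
`D(w_k) = Σ_{i<k} b_{i,k} w_i + χ` with `χ ∈ B ⊗ Λ^{≥2}W` and `D(w_i) ∈ B ⊗ Λ^{≥2}W`
for all `i < k`, then each coefficient `b_{i,k}` is a `d_B`-exact cycle:
`d_B(b_{i,k}) = 0` and `b_{i,k} = d_B(η_{i,k})` for some `η_{i,k} ∈ B`. -/
theorem stmt15 (B : Type) [CommRing B] [Algebra ℚ B]
    (𝒜 : ℤ → Submodule ℚ B) [GradedAlgebra 𝒜]
    (ι : Type) [LinearOrder ι] (deg : ι → ℤ) (hWodd : ∀ i, Odd (deg i))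
    (dB : B →ₗ[ℚ] B) (hdB : IsBDifferential 𝒜 dB)
    (hHodd : ∀ n : ℤ, Odd n → ∀ b ∈ 𝒜 n, dB b = 0 → ∃ c, dB c = b)
    (D : MExt B ι →ₗ[ℚ] MExt B ι) (hD : IsModelDifferential 𝒜 dB D)
    (hSul : IsRelSullivan D)
    (k : ι) (S : Finset ι) (hS : ∀ i ∈ S, i < k)
    (b : ι → B) (hdeg : ∀ i ∈ S, b i ∈ 𝒜 (deg k + 1 - deg i))
    (χ : MExt B ι) (hχ : χ ∈ lenGeTwo B ι)
    (hlow : ∀ i, i < k → D (egen i) ∈ lenGeTwo B ι)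
    (hDk : D (egen k) = (∑ i ∈ S, algebraMap B _ (b i) * egen i) + χ) :
    ∀ i ∈ S, dB (b i) = 0 ∧ ∃ η : B, dB η = b i := by
  intro i hi
  have hcycle : dB (b i) = 0 := by
    have h0 : D (D (egen k)) = 0 := hD.1 (egen k)
    rw [hDk, map_add, map_sum] at h0
    have hpsi := congrArg (fun z => (Stmt15Aux.phi i z).snd) h0
    simp only [map_add, map_sum, map_zero, TrivSqZeroExt.snd_add, TrivSqZeroExt.snd_sum,
      TrivSqZeroExt.snd_zero] at hpsi
    have hterm : ∀ j ∈ S, (Stmt15Aux.phi i (D (algebraMap B (MExt B ι) (b j) * egen j))).snd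
        = if j = i then dB (b j) else 0 := by
      intro j hj
      rw [hD.2.2.1 (deg k + 1 - deg j) (b j) (hdeg j hj) (egen j)]
      have h2 : (Stmt15Aux.phi i (((deg k + 1 - deg j).negOnePow : ℤ) •
          (algebraMap B (MExt B ι) (b j) * D (egen j)))).snd = 0 := by
        rw [map_zsmul, TrivSqZeroExt.snd_smul, Stmt15Aux.snd_phi_algebraMap_mul,
          Stmt15Aux.phi_lenGeTwo i (hlow j (hS j hj)), TrivSqZeroExt.snd_zero, mul_zero,
          smul_zero]
      rw [map_add, TrivSqZeroExt.snd_add, h2, add_zero, Stmt15Aux.snd_phi_algebraMap_mul,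
        Stmt15Aux.phi_egen, TrivSqZeroExt.snd_inr, Finsupp.single_apply]
      split <;> simp
    rw [Finset.sum_congr rfl hterm, Finset.sum_ite_eq' S i (fun j => dB (b j)), if_pos hi,
      Stmt15Aux.snd_phi_D i D hD.2.2.2 hSul.2 hχ, add_zero] at hpsi
    exact hpsi
  refine ⟨hcycle, ?_⟩
  obtain ⟨x, hx⟩ := hWodd k
  obtain ⟨y, hy⟩ := hWodd i
  exact hHodd (deg k + 1 - deg i) ⟨x - y, by omega⟩ (b i) (hdeg i hi) hcycle
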